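/- For every complex number s with Re(s) > 0, the series ∑_{η1,η2,η3,η4 ≥ 1} ϑ(η1,η2,η3,η4)·η1^{−(4s+1)} η2^{−(2s+1)} η3^{−(3s+1)} η4^{−(3s+1)} converges absolutely and equals the Euler product ∏_p [ 1 + (1 − 1/p)·( 1/(p^{2s+1}−1) + 2/(p^{3s+1}−1) + (1 − 2/p)/(p^{4s+1}−1) ) + (1 − 1/p)²·(1/(p^{4s+1}−1))·( 1/(p^{2s+1}−1) + 2/(p^{3s+1}−1) ) ] over all primes p. -/

import Mathlib

noncomputable section

/-- `φ*(n) = ∏_{p | n} (1 - 1/p)`. -/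
def phiStar (n : ℕ) : ℝ := ∏ p ∈ n.primeFactors, (1 - 1 / (p : ℝ))

/-- `ϑ(η₁,η₂,η₃,η₄)`. -/
def vartheta (η1 η2 η3 η4 : ℕ) : ℝ :=
  if Nat.Coprime η2 η3 ∧ Nat.Coprime η2 η4 ∧ Nat.Coprime η3 η4 then
    phiStar η1 * phiStar η2 * phiStar η3 * phiStar η4 *
      ∏ p ∈ η1.primeFactors.filter (fun p => ¬ p ∣ η2 * η3 * η4), (1 - 2 / (p : ℝ))
  else 0

namespace VarthetaEP

open Nat Finset Complex

lemma one_sub_inv_nonneg {p : ℕ} (hp : p.Prime) : (0:ℝ) ≤ 1 - 1 / (p:ℝ) := by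
  have h2 : (2:ℝ) ≤ p := by exact_mod_cast hp.two_le
  have : 1 / (p:ℝ) ≤ 1 := by
    rw [div_le_one (by linarith)]; linarith
  linarith

lemma one_sub_inv_le_one {p : ℕ} (hp : p.Prime) : 1 - 1 / (p:ℝ) ≤ 1 := by
  have h2 : (2:ℝ) ≤ p := by exact_mod_cast hp.two_le
  have : 0 ≤ 1 / (p:ℝ) := by positivity
  linarith

lemma one_sub_two_inv_nonneg {p : ℕ} (hp : p.Prime) : (0:ℝ) ≤ 1 - 2 / (p:ℝ) := by
  have h2 : (2:ℝ) ≤ p := by exact_mod_cast hp.two_le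
  have : 2 / (p:ℝ) ≤ 1 := by
    rw [div_le_one (by linarith)]; linarith
  linarith

lemma one_sub_two_inv_le_one {p : ℕ} (hp : p.Prime) : 1 - 2 / (p:ℝ) ≤ 1 := by
  have h2 : (2:ℝ) ≤ p := by exact_mod_cast hp.two_le
  have : 0 ≤ 2 / (p:ℝ) := by positivity
  linarith

lemma phiStar_one : phiStar 1 = 1 := by simp [phiStar]

lemma phiStar_nonneg (n : ℕ) : 0 ≤ phiStar n :=
  Finset.prod_nonneg fun p hp => one_sub_inv_nonneg (Nat.prime_of_mem_primeFactors hp)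

lemma phiStar_le_one (n : ℕ) : phiStar n ≤ 1 :=
  Finset.prod_le_one (fun p hp => one_sub_inv_nonneg (Nat.prime_of_mem_primeFactors hp))
    (fun p hp => one_sub_inv_le_one (Nat.prime_of_mem_primeFactors hp))

lemma phiStar_mul {m n : ℕ} (h : Nat.Coprime m n) (hm : m ≠ 0) (hn : n ≠ 0) :
    phiStar (m * n) = phiStar m * phiStar n := by
  rw [phiStar, Nat.primeFactors_mul hm hn, Finset.prod_union h.disjoint_primeFactors]
  rfl

lemma phiStar_pow {p : ℕ} (hp : p.Prime) {k : ℕ} (hk : k ≠ 0) :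
    phiStar (p ^ k) = 1 - 1 / (p:ℝ) := by
  rw [phiStar, Nat.primeFactors_pow _ hk, hp.primeFactors, Finset.prod_singleton]

lemma vartheta_nonneg (a b c d : ℕ) : 0 ≤ vartheta a b c d := by
  rw [vartheta]
  split
  · refine mul_nonneg (mul_nonneg (mul_nonneg (mul_nonneg ?_ ?_) ?_) ?_) ?_ <;>
      first
        | exact phiStar_nonneg _
        | exact Finset.prod_nonneg fun p hp =>
            one_sub_two_inv_nonneg (Nat.prime_of_mem_primeFactors (Finset.mem_of_mem_filter _ hp))
  · exact le_refl 0

lemma vartheta_le_one (a b c d : ℕ) : vartheta a b c d ≤ 1 := by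
  rw [vartheta]
  split
  · have hP0 : 0 ≤ ∏ p ∈ a.primeFactors.filter (fun p => ¬ p ∣ b * c * d), (1 - 2 / (p : ℝ)) :=
      Finset.prod_nonneg fun p hp =>
        one_sub_two_inv_nonneg (Nat.prime_of_mem_primeFactors (Finset.mem_of_mem_filter _ hp))
    have hP1 : ∏ p ∈ a.primeFactors.filter (fun p => ¬ p ∣ b * c * d), (1 - 2 / (p : ℝ)) ≤ 1 :=
      Finset.prod_le_one
        (fun p hp => one_sub_two_inv_nonneg
          (Nat.prime_of_mem_primeFactors (Finset.mem_of_mem_filter _ hp)))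
        (fun p hp => one_sub_two_inv_le_one
          (Nat.prime_of_mem_primeFactors (Finset.mem_of_mem_filter _ hp)))
    have h4 : phiStar a * phiStar b * phiStar c * phiStar d ≤ 1 :=
      mul_le_one₀ (mul_le_one₀ (mul_le_one₀ (phiStar_le_one a) (phiStar_nonneg b)
        (phiStar_le_one b)) (phiStar_nonneg c) (phiStar_le_one c)) (phiStar_nonneg d)
        (phiStar_le_one d)
    exact mul_le_one₀ h4 hP0 hP1
  · exact zero_le_one


lemma not_dvd_of_coprime {p x y : ℕ} (hp : p.Prime) (h : Nat.Coprime x y) (hpx : p ∣ x) :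
    ¬ p ∣ y :=
  hp.coprime_iff_not_dvd.mp (Nat.Coprime.coprime_dvd_left hpx h)

lemma vartheta_mul {a b c d m n k l : ℕ} (ha : a ≠ 0) (hb : b ≠ 0) (hc : c ≠ 0) (hd : d ≠ 0)
    (hm : m ≠ 0) (hn : n ≠ 0) (hk : k ≠ 0) (hl : l ≠ 0)
    (hco : Nat.Coprime (a * b * c * d) (m * n * k * l)) :
    vartheta (a * m) (b * n) (c * k) (d * l) = vartheta a b c d * vartheta m n k l := by
  rw [Nat.coprime_mul_iff_left, Nat.coprime_mul_iff_left, Nat.coprime_mul_iff_left] at hco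
  obtain ⟨⟨⟨hA, hB⟩, hC⟩, hD⟩ := hco
  rw [Nat.coprime_mul_iff_right, Nat.coprime_mul_iff_right, Nat.coprime_mul_iff_right] at hA hB hC hD
  obtain ⟨⟨⟨ham, han⟩, hak⟩, hal⟩ := hA
  obtain ⟨⟨⟨hbm, hbn⟩, hbk⟩, hbl⟩ := hB
  obtain ⟨⟨⟨hcm, hcn⟩, hck⟩, hcl⟩ := hC
  obtain ⟨⟨⟨hdm, hdn⟩, hdk⟩, hdl⟩ := hD
  have hcond : (Nat.Coprime (b * n) (c * k) ∧ Nat.Coprime (b * n) (d * l) ∧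
      Nat.Coprime (c * k) (d * l)) ↔
      ((Nat.Coprime b c ∧ Nat.Coprime b d ∧ Nat.Coprime c d) ∧
        (Nat.Coprime n k ∧ Nat.Coprime n l ∧ Nat.Coprime k l)) := by
    simp only [Nat.coprime_mul_iff_left, Nat.coprime_mul_iff_right]
    constructor
    · rintro ⟨⟨⟨h1, _⟩, ⟨_, h2⟩⟩, ⟨⟨h3, _⟩, ⟨_, h4⟩⟩, ⟨⟨h5, _⟩, ⟨_, h6⟩⟩⟩
      exact ⟨⟨h1, h3, h5⟩, ⟨h2, h4, h6⟩⟩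
    · rintro ⟨⟨h1, h2, h3⟩, ⟨h4, h5, h6⟩⟩
      exact ⟨⟨⟨h1, hcn.symm⟩, ⟨hbk, h4⟩⟩, ⟨⟨h2, hdn.symm⟩, ⟨hbl, h5⟩⟩, ⟨⟨h3, hdk.symm⟩, ⟨hcl, h6⟩⟩⟩
  rw [vartheta, vartheta, vartheta]
  by_cases H : (Nat.Coprime b c ∧ Nat.Coprime b d ∧ Nat.Coprime c d) ∧
      (Nat.Coprime n k ∧ Nat.Coprime n l ∧ Nat.Coprime k l)
  · rw [if_pos (hcond.mpr H), if_pos H.1, if_pos H.2]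
    rw [phiStar_mul ham ha hm, phiStar_mul hbn hb hn, phiStar_mul hck hc hk,
      phiStar_mul hdl hd hl, Nat.primeFactors_mul ha hm, Finset.filter_union,
      Finset.prod_union (Finset.disjoint_filter_filter ham.disjoint_primeFactors)]
    have e1 : (a.primeFactors.filter fun p => ¬ p ∣ b * n * (c * k) * (d * l)) =
        a.primeFactors.filter fun p => ¬ p ∣ b * c * d := by
      refine Finset.filter_congr fun p hp => ?_
      have hpp := Nat.prime_of_mem_primeFactors hp
      have hpa := Nat.dvd_of_mem_primeFactors hp
      simp only [hpp.dvd_mul, not_or]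
      have h1 := not_dvd_of_coprime hpp han hpa
      have h2 := not_dvd_of_coprime hpp hak hpa
      have h3 := not_dvd_of_coprime hpp hal hpa
      tauto
    have e2 : (m.primeFactors.filter fun p => ¬ p ∣ b * n * (c * k) * (d * l)) =
        m.primeFactors.filter fun p => ¬ p ∣ n * k * l := by
      refine Finset.filter_congr fun p hp => ?_
      have hpp := Nat.prime_of_mem_primeFactors hp
      have hpm := Nat.dvd_of_mem_primeFactors hp
      simp only [hpp.dvd_mul, not_or]
      have h1 := not_dvd_of_coprime hpp hbm.symm hpm
      have h2 := not_dvd_of_coprime hpp hcm.symm hpm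
      have h3 := not_dvd_of_coprime hpp hdm.symm hpm
      tauto
    rw [e1, e2]
    ring
  · rw [if_neg (fun hh => H (hcond.mp hh))]
    rcases not_and_or.mp H with H1 | H1
    · rw [if_neg H1, zero_mul]
    · rw [if_neg H1, mul_zero]

/-- The term of the quadruple Dirichlet series. -/
def Fth (s : ℂ) (η : ℕ × ℕ × ℕ × ℕ) : ℂ :=
  (vartheta η.1 η.2.1 η.2.2.1 η.2.2.2 : ℂ) * (η.1 : ℂ) ^ (-(4 * s + 1)) *
    (η.2.1 : ℂ) ^ (-(2 * s + 1)) * (η.2.2.1 : ℂ) ^ (-(3 * s + 1)) *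
    (η.2.2.2 : ℂ) ^ (-(3 * s + 1))

variable {s : ℂ} (hs : 0 < s.re)

include hs in
lemma exp_ne_zero (k : ℝ) (hk : 1 ≤ k) : -((k : ℂ) * s + 1) ≠ 0 := by
  intro h
  have h' := congrArg Complex.re h
  simp only [Complex.neg_re, Complex.add_re, Complex.mul_re, Complex.ofReal_re,
    Complex.ofReal_im, Complex.one_re, Complex.zero_re, zero_mul, sub_zero] at h'
  nlinarith

include hs in
lemma Fth_zero_left {η : ℕ × ℕ × ℕ × ℕ} (h : η.1 = 0 ∨ η.2.1 = 0 ∨ η.2.2.1 = 0 ∨ η.2.2.2 = 0) :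
    Fth s η = 0 := by
  have e4 : -(4 * s + 1) ≠ 0 := by have := exp_ne_zero hs 4 (by norm_num); simpa using this
  have e2 : -(2 * s + 1) ≠ 0 := by have := exp_ne_zero hs 2 (by norm_num); simpa using this
  have e3 : -(3 * s + 1) ≠ 0 := by have := exp_ne_zero hs 3 (by norm_num); simpa using this
  rw [Fth]
  rcases h with h | h | h | h
  · rw [h, Nat.cast_zero, Complex.zero_cpow e4]; ring
  · rw [h, Nat.cast_zero, Complex.zero_cpow e2]; ring
  · rw [h, Nat.cast_zero, Complex.zero_cpow e3]; ring
  · rw [h, Nat.cast_zero, Complex.zero_cpow e3]; ring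

lemma Fth_one : Fth s (1, 1, 1, 1) = 1 := by
  have : vartheta 1 1 1 1 = 1 := by
    rw [vartheta, if_pos ⟨Nat.coprime_one_left 1, Nat.coprime_one_left 1,
      Nat.coprime_one_left 1⟩]
    simp [phiStar_one]
  simp [Fth, this]

lemma natCast_mul_cpow (m n : ℕ) (w : ℂ) :
    (((m * n : ℕ) : ℂ)) ^ w = ((m : ℕ) : ℂ) ^ w * ((n : ℕ) : ℂ) ^ w := by
  have := Complex.mul_cpow_ofReal_nonneg (a := (m : ℝ)) (b := (n : ℝ))
    (Nat.cast_nonneg m) (Nat.cast_nonneg n) w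
  push_cast at this ⊢
  exact this

lemma Fth_mul {a b c d m n k l : ℕ} (ha : a ≠ 0) (hb : b ≠ 0) (hc : c ≠ 0) (hd : d ≠ 0)
    (hm : m ≠ 0) (hn : n ≠ 0) (hk : k ≠ 0) (hl : l ≠ 0)
    (hco : Nat.Coprime (a * b * c * d) (m * n * k * l)) :
    Fth s (a * m, b * n, c * k, d * l) = Fth s (a, b, c, d) * Fth s (m, n, k, l) := by
  rw [Fth, Fth, Fth]
  simp only
  rw [vartheta_mul ha hb hc hd hm hn hk hl hco, natCast_mul_cpow, natCast_mul_cpow,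
    natCast_mul_cpow, natCast_mul_cpow]
  push_cast
  ring

/-- The comparison function. -/
def Gbd (σ : ℝ) (η : ℕ × ℕ × ℕ × ℕ) : ℝ :=
  (η.1 : ℝ) ^ (-(4 * σ + 1)) * ((η.2.1 : ℝ) ^ (-(2 * σ + 1)) *
    ((η.2.2.1 : ℝ) ^ (-(3 * σ + 1)) * (η.2.2.2 : ℝ) ^ (-(3 * σ + 1))))

lemma Gbd_nonneg (σ : ℝ) (η : ℕ × ℕ × ℕ × ℕ) : 0 ≤ Gbd σ η := by
  unfold Gbd
  positivity

include hs in
lemma norm_Fth_le (η : ℕ × ℕ × ℕ × ℕ) : ‖Fth s η‖ ≤ Gbd s.re η := by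
  obtain ⟨a, b, c, d⟩ := η
  by_cases h0 : a = 0 ∨ b = 0 ∨ c = 0 ∨ d = 0
  · rw [Fth_zero_left hs h0]
    simpa using Gbd_nonneg s.re (a, b, c, d)
  · push_neg at h0
    obtain ⟨ha, hb, hc, hd⟩ := h0
    have hre4 : (-(4 * s + 1)).re = -(4 * s.re + 1) := by
      simp [Complex.add_re, Complex.mul_re]
    have hre2 : (-(2 * s + 1)).re = -(2 * s.re + 1) := by
      simp [Complex.add_re, Complex.mul_re]
    have hre3 : (-(3 * s + 1)).re = -(3 * s.re + 1) := by
      simp [Complex.add_re, Complex.mul_re]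
    have hn : ∀ (n : ℕ), n ≠ 0 → ∀ w : ℂ, ‖((n : ℕ) : ℂ) ^ w‖ = (n : ℝ) ^ w.re := by
      intro n hn w
      rw [← Complex.ofReal_natCast,
        Complex.norm_cpow_eq_rpow_re_of_pos (by positivity)]
    rw [Fth]
    simp only [norm_mul, hn a ha, hn b hb, hn c hc, hn d hd, hre2, hre3, hre4]
    have hv : ‖((vartheta a b c d : ℝ) : ℂ)‖ ≤ 1 := by
      rw [Complex.norm_real, Real.norm_eq_abs, _root_.abs_of_nonneg (vartheta_nonneg a b c d)]
      exact vartheta_le_one a b c d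
    have h1 : (0:ℝ) ≤ (a : ℝ) ^ (-(4 * s.re + 1)) := by positivity
    have h2 : (0:ℝ) ≤ (b : ℝ) ^ (-(2 * s.re + 1)) := by positivity
    have h3 : (0:ℝ) ≤ (c : ℝ) ^ (-(3 * s.re + 1)) := by positivity
    have h4 : (0:ℝ) ≤ (d : ℝ) ^ (-(3 * s.re + 1)) := by positivity
    have := mul_le_of_le_one_left (mul_nonneg (mul_nonneg (mul_nonneg h1 h2) h3) h4) hv
    calc ‖((vartheta a b c d : ℝ) : ℂ)‖ * (a : ℝ) ^ (-(4 * s.re + 1)) *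
          (b : ℝ) ^ (-(2 * s.re + 1)) * (c : ℝ) ^ (-(3 * s.re + 1)) *
          (d : ℝ) ^ (-(3 * s.re + 1))
        ≤ (a : ℝ) ^ (-(4 * s.re + 1)) * (b : ℝ) ^ (-(2 * s.re + 1)) *
          (c : ℝ) ^ (-(3 * s.re + 1)) * (d : ℝ) ^ (-(3 * s.re + 1)) := by
          nlinarith [norm_nonneg ((vartheta a b c d : ℝ) : ℂ)]
      _ = Gbd s.re (a, b, c, d) := by rw [Gbd]; ring

include hs in
lemma summable_Gbd : Summable (Gbd s.re) := by
  have hsum : ∀ c : ℝ, 1 < c → Summable (fun n : ℕ => (n : ℝ) ^ (-c)) := by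
    intro c hc
    exact Real.summable_nat_rpow.mpr (by linarith)
  have h4 : Summable (fun n : ℕ => (n : ℝ) ^ (-(4 * s.re + 1))) := hsum _ (by linarith)
  have h2 : Summable (fun n : ℕ => (n : ℝ) ^ (-(2 * s.re + 1))) := hsum _ (by linarith)
  have h3 : Summable (fun n : ℕ => (n : ℝ) ^ (-(3 * s.re + 1))) := hsum _ (by linarith)
  have nn : ∀ c : ℝ, 0 ≤ fun n : ℕ => (n : ℝ) ^ (-c) := by
    intro c n
    positivity
  exact h4.mul_of_nonneg (h2.mul_of_nonneg (h3.mul_of_nonneg h3 (nn _) (nn _)) (nn _)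
    (fun η => mul_nonneg (nn _ η.1) (nn _ η.2))) (nn _)
    (fun η => mul_nonneg (nn _ η.1) (mul_nonneg (nn _ η.2.1) (nn _ η.2.2)))

include hs in
lemma summable_norm_Fth : Summable (fun η => ‖Fth s η‖) :=
  Summable.of_nonneg_of_le (fun _ => norm_nonneg _) (norm_Fth_le hs) (summable_Gbd hs)

/-- Local factor (as a sum). -/
def Lp (s : ℂ) (p : ℕ) : ℂ :=
  ∑' e : ℕ × ℕ × ℕ × ℕ, Fth s (p ^ e.1, p ^ e.2.1, p ^ e.2.2.1, p ^ e.2.2.2)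

lemma pow_inj {p : ℕ} (hp : p.Prime) :
    Function.Injective (fun e : ℕ × ℕ × ℕ × ℕ =>
      ((p ^ e.1, p ^ e.2.1, p ^ e.2.2.1, p ^ e.2.2.2) : ℕ × ℕ × ℕ × ℕ)) := by
  have h := Nat.pow_right_injective hp.two_le
  rintro ⟨a, b, c, d⟩ ⟨a', b', c', d'⟩ hx
  simp only [Prod.mk.injEq] at hx
  obtain ⟨h1, h2, h3, h4⟩ := hx
  simp [h h1, h h2, h h3, h h4]

include hs in
lemma summable_norm_Fth_pow {p : ℕ} (hp : p.Prime) :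
    Summable (fun e : ℕ × ℕ × ℕ × ℕ =>
      ‖Fth s (p ^ e.1, p ^ e.2.1, p ^ e.2.2.1, p ^ e.2.2.2)‖) :=
  (summable_norm_Fth hs).comp_injective (pow_inj hp)

include hs in
lemma hasSum_Lp {p : ℕ} (hp : p.Prime) :
    HasSum (fun e : ℕ × ℕ × ℕ × ℕ =>
      Fth s (p ^ e.1, p ^ e.2.1, p ^ e.2.2.1, p ^ e.2.2.2)) (Lp s p) :=
  (summable_norm_Fth_pow hs hp).of_norm.hasSum

open Nat in
/-- The tuple version of `Nat.equivProdNatFactoredNumbers`. -/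
def tupEquiv {p : ℕ} {S : Finset ℕ} (hp : p.Prime) (hS : p ∉ S) :
    (ℕ × ℕ × ℕ × ℕ) ×
      (↥(factoredNumbers S) × ↥(factoredNumbers S) × ↥(factoredNumbers S) ×
        ↥(factoredNumbers S)) ≃
      ↥(factoredNumbers (insert p S)) × ↥(factoredNumbers (insert p S)) ×
        ↥(factoredNumbers (insert p S)) × ↥(factoredNumbers (insert p S)) :=
  ((Equiv.prodProdProdComm ℕ (ℕ × ℕ × ℕ) _ _).trans
    (Equiv.prodCongr (Equiv.refl _) ((Equiv.prodProdProdComm ℕ (ℕ × ℕ) _ _).trans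
      (Equiv.prodCongr (Equiv.refl _) (Equiv.prodProdProdComm ℕ ℕ _ _))))).trans
    (Equiv.prodCongr (equivProdNatFactoredNumbers hp hS)
      (Equiv.prodCongr (equivProdNatFactoredNumbers hp hS)
        (Equiv.prodCongr (equivProdNatFactoredNumbers hp hS)
          (equivProdNatFactoredNumbers hp hS))))

open Nat in
lemma Fth_tupEquiv {p : ℕ} {S : Finset ℕ} (hp : p.Prime) (hS : p ∉ S)
    (x : (ℕ × ℕ × ℕ × ℕ) ×
      (↥(factoredNumbers S) × ↥(factoredNumbers S) × ↥(factoredNumbers S) ×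
        ↥(factoredNumbers S))) :
    (fun m : ↥(factoredNumbers (insert p S)) × ↥(factoredNumbers (insert p S)) ×
        ↥(factoredNumbers (insert p S)) × ↥(factoredNumbers (insert p S)) =>
      Fth s ((m.1 : ℕ), (m.2.1 : ℕ), (m.2.2.1 : ℕ), (m.2.2.2 : ℕ))) (tupEquiv hp hS x) =
      Fth s (p ^ x.1.1, p ^ x.1.2.1, p ^ x.1.2.2.1, p ^ x.1.2.2.2) *
        Fth s ((x.2.1 : ℕ), (x.2.2.1 : ℕ), (x.2.2.2.1 : ℕ), (x.2.2.2.2 : ℕ)) := by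
  obtain ⟨⟨a, b, c, d⟩, ⟨⟨m1, hm1⟩, ⟨m2, hm2⟩, ⟨m3, hm3⟩, ⟨m4, hm4⟩⟩⟩ := x
  show Fth s (p ^ a * m1, p ^ b * m2, p ^ c * m3, p ^ d * m4) = _
  have hcop : ∀ (n : ℕ), n ∈ factoredNumbers S → Nat.Coprime p n := fun n hn =>
    hp.factoredNumbers_coprime hS hn
  have h1 : Nat.Coprime p (m1 * m2 * m3 * m4) :=
    (((hcop m1 hm1).mul_right (hcop m2 hm2)).mul_right (hcop m3 hm3)).mul_right (hcop m4 hm4)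
  have hco : Nat.Coprime (p ^ a * p ^ b * p ^ c * p ^ d) (m1 * m2 * m3 * m4) :=
    Nat.coprime_mul_iff_left.mpr ⟨Nat.coprime_mul_iff_left.mpr
      ⟨Nat.coprime_mul_iff_left.mpr ⟨h1.pow_left a, h1.pow_left b⟩, h1.pow_left c⟩,
      h1.pow_left d⟩
  exact Fth_mul (pow_ne_zero a hp.ne_zero) (pow_ne_zero b hp.ne_zero)
    (pow_ne_zero c hp.ne_zero) (pow_ne_zero d hp.ne_zero)
    (ne_zero_of_mem_factoredNumbers hm1) (ne_zero_of_mem_factoredNumbers hm2)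
    (ne_zero_of_mem_factoredNumbers hm3) (ne_zero_of_mem_factoredNumbers hm4) hco

set_option maxHeartbeats 2000000 in
open Nat in
include hs in
lemma key_induction (S : Finset ℕ) :
    Summable (fun m : ↥(factoredNumbers S) × ↥(factoredNumbers S) × ↥(factoredNumbers S) ×
        ↥(factoredNumbers S) =>
      ‖Fth s ((m.1 : ℕ), (m.2.1 : ℕ), (m.2.2.1 : ℕ), (m.2.2.2 : ℕ))‖) ∧
      HasSum (fun m : ↥(factoredNumbers S) × ↥(factoredNumbers S) × ↥(factoredNumbers S) ×
          ↥(factoredNumbers S) =>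
        Fth s ((m.1 : ℕ), (m.2.1 : ℕ), (m.2.2.1 : ℕ), (m.2.2.2 : ℕ)))
        (∏ p ∈ S.filter Nat.Prime, Lp s p) := by
  classical
  induction' S using Finset.induction with p S hpS ih
  · rw [Finset.filter_empty, Finset.prod_empty, factoredNumbers_empty]
    have hu : ∀ (m : ↥({1} : Set ℕ) × ↥({1} : Set ℕ) × ↥({1} : Set ℕ) × ↥({1} : Set ℕ)),
        Fth s ((m.1 : ℕ), (m.2.1 : ℕ), (m.2.2.1 : ℕ), (m.2.2.2 : ℕ)) = 1 := by
      rintro ⟨⟨m1, hm1⟩, ⟨m2, hm2⟩, ⟨m3, hm3⟩, ⟨m4, hm4⟩⟩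
      simp only [Set.mem_singleton_iff] at hm1 hm2 hm3 hm4
      subst hm1; subst hm2; subst hm3; subst hm4
      exact Fth_one
    haveI : Unique (↥({1} : Set ℕ)) := Set.uniqueSingleton 1
    constructor
    · refine ⟨1, ?_⟩
      have := hasSum_single (f := fun m : ↥({1} : Set ℕ) × ↥({1} : Set ℕ) × ↥({1} : Set ℕ) ×
          ↥({1} : Set ℕ) => ‖Fth s ((m.1 : ℕ), (m.2.1 : ℕ), (m.2.2.1 : ℕ), (m.2.2.2 : ℕ))‖)
        default (fun b hb => absurd (Subsingleton.elim b default) hb)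
      simpa [hu default] using this
    · have := hasSum_single (f := fun m : ↥({1} : Set ℕ) × ↥({1} : Set ℕ) × ↥({1} : Set ℕ) ×
          ↥({1} : Set ℕ) => Fth s ((m.1 : ℕ), (m.2.1 : ℕ), (m.2.2.1 : ℕ), (m.2.2.2 : ℕ)))
        default (fun b hb => absurd (Subsingleton.elim b default) hb)
      simpa [hu default] using this
  · rw [Finset.filter_insert]
    split_ifs with hpp
    · constructor
      · rw [← (tupEquiv hpp hpS).summable_iff]
        have hb : ∀ x, ((fun m : ↥(factoredNumbers (insert p S)) ×
              ↥(factoredNumbers (insert p S)) × ↥(factoredNumbers (insert p S)) ×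
              ↥(factoredNumbers (insert p S)) =>
            ‖Fth s ((m.1 : ℕ), (m.2.1 : ℕ), (m.2.2.1 : ℕ), (m.2.2.2 : ℕ))‖) ∘
              (tupEquiv hpp hpS)) x ≤
            ‖Fth s (p ^ x.1.1, p ^ x.1.2.1, p ^ x.1.2.2.1, p ^ x.1.2.2.2)‖ *
              ‖Fth s ((x.2.1 : ℕ), (x.2.2.1 : ℕ), (x.2.2.2.1 : ℕ), (x.2.2.2.2 : ℕ))‖ := by
          intro x
          have := Fth_tupEquiv (s := s) hpp hpS x
          simp only [Function.comp_apply]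
          rw [show ‖Fth s (((tupEquiv hpp hpS x).1 : ℕ), ((tupEquiv hpp hpS x).2.1 : ℕ),
            ((tupEquiv hpp hpS x).2.2.1 : ℕ), ((tupEquiv hpp hpS x).2.2.2 : ℕ))‖ =
            ‖Fth s (p ^ x.1.1, p ^ x.1.2.1, p ^ x.1.2.2.1, p ^ x.1.2.2.2) *
              Fth s ((x.2.1 : ℕ), (x.2.2.1 : ℕ), (x.2.2.2.1 : ℕ), (x.2.2.2.2 : ℕ))‖ from
            congrArg norm this]
          exact norm_mul_le _ _
        refine Summable.of_nonneg_of_le (fun _ => norm_nonneg _) hb ?_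
        apply (summable_norm_Fth_pow hs hpp).mul_of_nonneg ih.1
          (fun _ => norm_nonneg _) (fun _ => norm_nonneg _)
      · have hp' : p ∉ S.filter Nat.Prime := fun h => hpS (Finset.mem_of_mem_filter p h)
        rw [Finset.prod_insert hp', ← (tupEquiv hpp hpS).hasSum_iff]
        have heq : ((fun m : ↥(factoredNumbers (insert p S)) ×
              ↥(factoredNumbers (insert p S)) × ↥(factoredNumbers (insert p S)) ×
              ↥(factoredNumbers (insert p S)) =>
            Fth s ((m.1 : ℕ), (m.2.1 : ℕ), (m.2.2.1 : ℕ), (m.2.2.2 : ℕ))) ∘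
              (tupEquiv hpp hpS)) =
            fun x => Fth s (p ^ x.1.1, p ^ x.1.2.1, p ^ x.1.2.2.1, p ^ x.1.2.2.2) *
              Fth s ((x.2.1 : ℕ), (x.2.2.1 : ℕ), (x.2.2.2.1 : ℕ), (x.2.2.2.2 : ℕ)) :=
          funext fun x => Fth_tupEquiv (s := s) hpp hpS x
        rw [heq]
        apply (hasSum_Lp hs hpp).mul ih.2
        apply summable_mul_of_summable_norm (summable_norm_Fth_pow hs hpp) ih.1
    · rwa [factoredNumbers_insert S hpp]

open Nat in
/-- The set of `S`-factored tuples. -/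
def setProd4 (S : Finset ℕ) : Set (ℕ × ℕ × ℕ × ℕ) :=
  {η | η.1 ∈ factoredNumbers S ∧ η.2.1 ∈ factoredNumbers S ∧ η.2.2.1 ∈ factoredNumbers S ∧
    η.2.2.2 ∈ factoredNumbers S}

open Nat in
def setProd4Equiv (S : Finset ℕ) :
    (↥(factoredNumbers S) × ↥(factoredNumbers S) × ↥(factoredNumbers S) ×
      ↥(factoredNumbers S)) ≃ ↥(setProd4 S) where
  toFun m := ⟨((m.1 : ℕ), (m.2.1 : ℕ), (m.2.2.1 : ℕ), (m.2.2.2 : ℕ)),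
    ⟨m.1.2, m.2.1.2, m.2.2.1.2, m.2.2.2.2⟩⟩
  invFun x := ⟨⟨x.1.1, x.2.1⟩, ⟨x.1.2.1, x.2.2.1⟩, ⟨x.1.2.2.1, x.2.2.2.1⟩,
    ⟨x.1.2.2.2, x.2.2.2.2⟩⟩
  left_inv := by rintro ⟨⟨a, ha⟩, ⟨b, hb⟩, ⟨c, hc⟩, ⟨d, hd⟩⟩; rfl
  right_inv := by rintro ⟨⟨a, b, c, d⟩, h⟩; rfl

open Nat in
include hs in
lemma tsum_setProd4 (S : Finset ℕ) :
    ∑' m : ↥(factoredNumbers S) × ↥(factoredNumbers S) × ↥(factoredNumbers S) ×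
        ↥(factoredNumbers S),
      Fth s ((m.1 : ℕ), (m.2.1 : ℕ), (m.2.2.1 : ℕ), (m.2.2.2 : ℕ)) =
      ∑' x : ↥(setProd4 S), Fth s (x : ℕ × ℕ × ℕ × ℕ) := by
  rw [← (setProd4Equiv S).tsum_eq (fun x : ↥(setProd4 S) => Fth s (x : ℕ × ℕ × ℕ × ℕ))]
  rfl

open Nat in
include hs in
lemma vanishing {ε : ℝ} (hε : 0 < ε) :
    ∃ N : ℕ, ∀ S : Finset ℕ, primesBelow N ≤ S →
      ‖(∑' η : ℕ × ℕ × ℕ × ℕ, Fth s η) - ∑' x : ↥(setProd4 S), Fth s (x : ℕ × ℕ × ℕ × ℕ)‖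
        < ε := by
  have hsumF : Summable (Fth s) := (summable_norm_Fth hs).of_norm
  obtain ⟨T, hT⟩ := hsumF.tsum_vanishing (Metric.ball_mem_nhds 0 hε)
  set N : ℕ := (T.sup fun η => max (max η.1 η.2.1) (max η.2.2.1 η.2.2.2)) + 1 with hN
  refine ⟨N, fun S hS => ?_⟩
  rw [← hsumF.tsum_subtype_add_tsum_subtype_compl (setProd4 S), add_sub_cancel_left]
  set B : Set (ℕ × ℕ × ℕ × ℕ) :=
    (setProd4 S)ᶜ ∩ {η | η.1 ≠ 0 ∧ η.2.1 ≠ 0 ∧ η.2.2.1 ≠ 0 ∧ η.2.2.2 ≠ 0} with hB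
  have h1 : ∑' x : ↥((setProd4 S)ᶜ), Fth s (x : ℕ × ℕ × ℕ × ℕ) =
      ∑' x : ↥B, Fth s (x : ℕ × ℕ × ℕ × ℕ) := by
    rw [_root_.tsum_subtype, _root_.tsum_subtype]
    refine tsum_congr fun η => ?_
    by_cases hη : η ∈ B
    · rw [Set.indicator_of_mem hη, Set.indicator_of_mem hη.1]
    · rw [Set.indicator_of_notMem hη]
      by_cases hη' : η ∈ (setProd4 S)ᶜ
      · rw [Set.indicator_of_mem hη']
        have : ¬(η.1 ≠ 0 ∧ η.2.1 ≠ 0 ∧ η.2.2.1 ≠ 0 ∧ η.2.2.2 ≠ 0) := fun hc =>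
          hη ⟨hη', hc⟩
        push_neg at this
        rcases Decidable.em (η.1 = 0) with h | h
        · exact Fth_zero_left hs (Or.inl h)
        · rcases Decidable.em (η.2.1 = 0) with h' | h'
          · exact Fth_zero_left hs (Or.inr (Or.inl h'))
          · rcases Decidable.em (η.2.2.1 = 0) with h'' | h''
            · exact Fth_zero_left hs (Or.inr (Or.inr (Or.inl h'')))
            · exact Fth_zero_left hs (Or.inr (Or.inr (Or.inr (this h h' h''))))
      · rw [Set.indicator_of_notMem hη']
  rw [h1]
  have hdisj : Disjoint B (T : Set (ℕ × ℕ × ℕ × ℕ)) := by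
    rw [Set.disjoint_left]
    rintro η ⟨hη1, hη2⟩ hηT
    have hbound : max (max η.1 η.2.1) (max η.2.2.1 η.2.2.2) < N := by
      have := Finset.le_sup (f := fun η : ℕ × ℕ × ℕ × ℕ =>
        max (max η.1 η.2.1) (max η.2.2.1 η.2.2.2)) hηT
      omega
    have hgood : ∀ n : ℕ, n ≠ 0 → n ∉ factoredNumbers S → N ≤ n := by
      intro n hn0 hnS
      have := factoredNumbers_compl (N := N) hS
      exact this ⟨hnS, hn0⟩
    obtain ⟨h2, h3, h4, h5⟩ := hη2
    rw [setProd4, Set.mem_compl_iff, Set.mem_setOf_eq] at hη1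
    push_neg at hη1
    by_cases hc1 : η.1 ∈ factoredNumbers S
    · by_cases hc2 : η.2.1 ∈ factoredNumbers S
      · by_cases hc3 : η.2.2.1 ∈ factoredNumbers S
        · have := hgood _ h5 (hη1 hc1 hc2 hc3)
          omega
        · have := hgood _ h4 hc3
          omega
      · have := hgood _ h3 hc2
        omega
    · have := hgood _ h2 hc1
      omega
  have := hT B hdisj
  rwa [Metric.mem_ball, _root_.dist_zero_right] at this

open Nat in
include hs in
lemma hasProd_Lp :
    HasProd (fun p : Nat.Primes => Lp s p) (∑' η : ℕ × ℕ × ℕ × ℕ, Fth s η) := by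
  change HasProd ((fun p : ℕ => Lp s p) ∘ Subtype.val : {p | Nat.Prime p} → ℂ) _
  rw [hasProd_subtype_iff_mulIndicator,
    HasProd, SummationFilter.unconditional_filter, Metric.tendsto_atTop]
  intro ε hε
  obtain ⟨N₀, hN₀⟩ := vanishing hs hε
  refine ⟨Finset.range N₀, fun t ht => ?_⟩
  have h1 : ∏ p ∈ t, {p | Nat.Prime p}.mulIndicator (fun p : ℕ => Lp s p) p =
      ∏ p ∈ t.filter Nat.Prime, Lp s p :=
    Finset.prod_mulIndicator_eq_prod_filter t (fun _ => fun p : ℕ => Lp s p) _ id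
  have h2 : ∏ p ∈ t.filter Nat.Prime, Lp s p =
      ∑' x : ↥(setProd4 t), Fth s (x : ℕ × ℕ × ℕ × ℕ) := by
    rw [← tsum_setProd4 hs t]
    exact ((key_induction hs t).2.tsum_eq).symm
  rw [h1, h2, dist_eq_norm, norm_sub_rev]
  refine hN₀ t fun p hp => ht ?_
  exact Finset.mem_range.mpr (lt_of_mem_primesBelow hp)

section LocalValues

variable {p : ℕ} (hp : p.Prime)

include hp in
lemma prime_pow_coprime_false (b c : ℕ) : ¬ Nat.Coprime (p ^ (b + 1)) (p ^ (c + 1)) := by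
  intro h
  rw [Nat.coprime_pow_left_iff (by omega), Nat.coprime_pow_right_iff (by omega)] at h
  exact hp.one_lt.ne' ((Nat.coprime_self p).mp h)

lemma vartheta_one : vartheta 1 1 1 1 = 1 := by
  rw [vartheta, if_pos ⟨Nat.coprime_one_left 1, Nat.coprime_one_left 1,
    Nat.coprime_one_left 1⟩]
  simp [phiStar_one]

include hp in
lemma phiStar_pow' (k : ℕ) : phiStar (p ^ (k + 1)) = 1 - 1 / (p : ℝ) :=
  phiStar_pow hp (Nat.succ_ne_zero k)

include hp in
lemma vartheta_p1 (a : ℕ) :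
    vartheta (p ^ (a + 1)) 1 1 1 = (1 - 1 / (p : ℝ)) * (1 - 2 / (p : ℝ)) := by
  rw [vartheta, if_pos ⟨Nat.coprime_one_left 1, Nat.coprime_one_left 1,
    Nat.coprime_one_left 1⟩]
  have hfac : (p ^ (a + 1)).primeFactors = {p} := by
    rw [Nat.primeFactors_pow _ (Nat.succ_ne_zero a), hp.primeFactors]
  rw [hfac, phiStar_pow' hp, phiStar_one]
  rw [show ({p} : Finset ℕ).filter (fun q => ¬ q ∣ 1 * 1 * 1) = {p} by
    rw [Finset.filter_singleton, if_pos (by simpa using hp.ne_one)]]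
  rw [Finset.prod_singleton]
  ring

include hp in
lemma filter_eq_empty_of_dvd {e1 M : ℕ} (hM : p ∣ M) :
    (p ^ e1).primeFactors.filter (fun q => ¬ q ∣ M) = ∅ := by
  rw [Finset.filter_eq_empty_iff]
  intro q hq
  have hq' : q = p := by
    have hqp : q.Prime := Nat.prime_of_mem_primeFactors hq
    have : q ∣ p ^ e1 := Nat.dvd_of_mem_primeFactors hq
    exact (Nat.prime_dvd_prime_iff_eq hqp hp).mp (hqp.dvd_of_dvd_pow this)
  simpa [hq'] using hM

include hp in
lemma vartheta_pos2 (e1 b : ℕ) :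
    vartheta (p ^ e1) (p ^ (b + 1)) 1 1 = phiStar (p ^ e1) * (1 - 1 / (p : ℝ)) := by
  rw [vartheta, if_pos ⟨Nat.coprime_one_right _, Nat.coprime_one_right _,
    Nat.coprime_one_left 1⟩]
  rw [filter_eq_empty_of_dvd hp (M := p ^ (b + 1) * 1 * 1)
    (by simpa using dvd_pow_self p (Nat.succ_ne_zero b))]
  rw [phiStar_pow' hp, phiStar_one, Finset.prod_empty]
  ring

include hp in
lemma vartheta_pos3 (e1 c : ℕ) :
    vartheta (p ^ e1) 1 (p ^ (c + 1)) 1 = phiStar (p ^ e1) * (1 - 1 / (p : ℝ)) := by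
  rw [vartheta, if_pos ⟨Nat.coprime_one_left _, Nat.coprime_one_left 1,
    Nat.coprime_one_right _⟩]
  rw [filter_eq_empty_of_dvd hp (M := 1 * p ^ (c + 1) * 1)
    (by simpa using dvd_pow_self p (Nat.succ_ne_zero c))]
  rw [phiStar_pow' hp, phiStar_one, Finset.prod_empty]
  ring

include hp in
lemma vartheta_pos4 (e1 d : ℕ) :
    vartheta (p ^ e1) 1 1 (p ^ (d + 1)) = phiStar (p ^ e1) * (1 - 1 / (p : ℝ)) := by
  rw [vartheta, if_pos ⟨Nat.coprime_one_left 1, Nat.coprime_one_left _,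
    Nat.coprime_one_left _⟩]
  rw [filter_eq_empty_of_dvd hp (M := 1 * 1 * p ^ (d + 1))
    (by simpa using dvd_pow_self p (Nat.succ_ne_zero d))]
  rw [phiStar_pow' hp, phiStar_one, Finset.prod_empty]
  ring

include hp in
lemma vartheta_zero23 (x w b c : ℕ) :
    vartheta x (p ^ (b + 1)) (p ^ (c + 1)) w = 0 := by
  rw [vartheta, if_neg]
  exact fun h => prime_pow_coprime_false hp b c h.1

include hp in
lemma vartheta_zero24 (x w b d : ℕ) :
    vartheta x (p ^ (b + 1)) w (p ^ (d + 1)) = 0 := by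
  rw [vartheta, if_neg]
  exact fun h => prime_pow_coprime_false hp b d h.2.1

include hp in
lemma vartheta_zero34 (x w c d : ℕ) :
    vartheta x w (p ^ (c + 1)) (p ^ (d + 1)) = 0 := by
  rw [vartheta, if_neg]
  exact fun h => prime_pow_coprime_false hp c d h.2.2

lemma cpow_pow_nat (p k : ℕ) (w : ℂ) :
    ((p ^ k : ℕ) : ℂ) ^ w = (((p : ℕ) : ℂ) ^ w) ^ k := by
  induction k with
  | zero => simp
  | succ n ih =>
    have : ((p ^ (n + 1) : ℕ) : ℂ) ^ w = ((p ^ n : ℕ) : ℂ) ^ w * ((p : ℕ) : ℂ) ^ w := by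
      rw [pow_succ, natCast_mul_cpow]
    rw [this, ih, pow_succ]

lemma norm_natCast_cpow {n : ℕ} (hn : n ≠ 0) (w : ℂ) :
    ‖((n : ℕ) : ℂ) ^ w‖ = (n : ℝ) ^ w.re := by
  rw [← Complex.ofReal_natCast,
    Complex.norm_cpow_eq_rpow_re_of_pos (by positivity)]

lemma hasSum_aux {u : ℂ} (hu : ‖u‖ < 1) (a b : ℂ) :
    HasSum (fun k : ℕ => a * u ^ k + (if k = 0 then b else 0)) (a * (1 - u)⁻¹ + b) :=
  ((hasSum_geometric_of_norm_lt_one hu).mul_left a).add (hasSum_ite_eq 0 b)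

lemma summable_norm_aux {u : ℂ} (hu : ‖u‖ < 1) (a b : ℂ) :
    Summable (fun k : ℕ => ‖a * u ^ k + (if k = 0 then b else 0)‖) := by
  refine Summable.of_nonneg_of_le (fun _ => norm_nonneg _) (fun k => norm_add_le _ _) ?_
  refine Summable.add ?_ ?_
  · have := (summable_geometric_of_lt_one (norm_nonneg u) hu).mul_left ‖a‖
    refine this.congr fun k => ?_
    simp [norm_mul, norm_pow]
  · refine ((hasSum_ite_eq (0 : ℕ) ‖b‖).summable).congr fun k => ?_
    by_cases hk : k = 0 <;> simp [hk]

set_option maxHeartbeats 2000000 in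
lemma hasSum_mul4 {f1 f2 f3 f4 : ℕ → ℂ} {a1 a2 a3 a4 : ℂ}
    (h1 : HasSum f1 a1) (h2 : HasSum f2 a2) (h3 : HasSum f3 a3) (h4 : HasSum f4 a4)
    (n1 : Summable fun k => ‖f1 k‖) (n2 : Summable fun k => ‖f2 k‖)
    (n3 : Summable fun k => ‖f3 k‖) (n4 : Summable fun k => ‖f4 k‖) :
    HasSum (fun e : ℕ × ℕ × ℕ × ℕ => f1 e.1 * (f2 e.2.1 * (f3 e.2.2.1 * f4 e.2.2.2)))
      (a1 * (a2 * (a3 * a4))) := by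
  have n34 : Summable fun q : ℕ × ℕ => ‖f3 q.1 * f4 q.2‖ := by
    refine Summable.of_nonneg_of_le (fun _ => norm_nonneg _) (fun q => norm_mul_le _ _) ?_
    exact n3.mul_of_nonneg n4 (fun _ => norm_nonneg _) (fun _ => norm_nonneg _)
  have h34 : HasSum (fun q : ℕ × ℕ => f3 q.1 * f4 q.2) (a3 * a4) :=
    h3.mul h4 (summable_mul_of_summable_norm n3 n4)
  have gb : Summable (fun q : ℕ × (ℕ × ℕ) => ‖f2 q.1‖ * (‖f3 q.2.1‖ * ‖f4 q.2.2‖)) :=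
    n2.mul_of_nonneg (n3.mul_of_nonneg n4 (fun _ => norm_nonneg _) (fun _ => norm_nonneg _))
      (fun _ => norm_nonneg _) (fun q => mul_nonneg (norm_nonneg _) (norm_nonneg _))
  have n234 : Summable fun q : ℕ × (ℕ × ℕ) => ‖f2 q.1 * (f3 q.2.1 * f4 q.2.2)‖ :=
    Summable.of_nonneg_of_le (fun _ => norm_nonneg _)
      (fun q => le_trans (norm_mul_le _ _)
        (mul_le_mul_of_nonneg_left (norm_mul_le _ _) (norm_nonneg _))) gb
  have h234 : HasSum (fun q : ℕ × (ℕ × ℕ) => f2 q.1 * (f3 q.2.1 * f4 q.2.2))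
      (a2 * (a3 * a4)) := by
    apply h2.mul h34
    apply summable_mul_of_summable_norm n2 n34
  apply h1.mul h234
  apply summable_mul_of_summable_norm n1 n234

include hp in
lemma vartheta_pos2_one (b : ℕ) : vartheta 1 (p ^ (b + 1)) 1 1 = 1 - 1 / (p : ℝ) := by
  simpa [phiStar_one] using vartheta_pos2 hp 0 b

include hp in
lemma vartheta_pos3_one (c : ℕ) : vartheta 1 1 (p ^ (c + 1)) 1 = 1 - 1 / (p : ℝ) := by
  simpa [phiStar_one] using vartheta_pos3 hp 0 c

include hp in
lemma vartheta_pos4_one (d : ℕ) : vartheta 1 1 1 (p ^ (d + 1)) = 1 - 1 / (p : ℝ) := by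
  simpa [phiStar_one] using vartheta_pos4 hp 0 d

include hp in
lemma vartheta_pos2_pow (a b : ℕ) :
    vartheta (p ^ (a + 1)) (p ^ (b + 1)) 1 1 = (1 - 1 / (p : ℝ)) * (1 - 1 / (p : ℝ)) := by
  simpa [phiStar_pow' hp] using vartheta_pos2 hp (a + 1) b

include hp in
lemma vartheta_pos3_pow (a c : ℕ) :
    vartheta (p ^ (a + 1)) 1 (p ^ (c + 1)) 1 = (1 - 1 / (p : ℝ)) * (1 - 1 / (p : ℝ)) := by
  simpa [phiStar_pow' hp] using vartheta_pos3 hp (a + 1) c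

include hp in
lemma vartheta_pos4_pow (a d : ℕ) :
    vartheta (p ^ (a + 1)) 1 1 (p ^ (d + 1)) = (1 - 1 / (p : ℝ)) * (1 - 1 / (p : ℝ)) := by
  simpa [phiStar_pow' hp] using vartheta_pos4 hp (a + 1) d

end LocalValues

section Decomp

variable {p : ℕ}

/-- local factor component functions -/
def gA (s : ℂ) (p : ℕ) : ℕ → ℂ := fun k =>
  ((1 - 1 / (p : ℂ)) * (1 - 2 / (p : ℂ))) * ((p : ℂ) ^ (-(4 * s + 1))) ^ k +
    (if k = 0 then 1 - (1 - 1 / (p : ℂ)) * (1 - 2 / (p : ℂ)) else 0)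

def gB (s : ℂ) (p : ℕ) : ℕ → ℂ := fun k =>
  (1 - 1 / (p : ℂ)) * ((p : ℂ) ^ (-(4 * s + 1))) ^ k +
    (if k = 0 then 1 - (1 - 1 / (p : ℂ)) else 0)

def gD (s : ℂ) (p : ℕ) : ℕ → ℂ := fun k =>
  (0 : ℂ) * ((p : ℂ) ^ (-(4 * s + 1))) ^ k + (if k = 0 then (1 : ℂ) else 0)

def gW2 (s : ℂ) (p : ℕ) : ℕ → ℂ := fun k =>
  (1 - 1 / (p : ℂ)) * ((p : ℂ) ^ (-(2 * s + 1))) ^ k +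
    (if k = 0 then -(1 - 1 / (p : ℂ)) else 0)

def gW3 (s : ℂ) (p : ℕ) : ℕ → ℂ := fun k =>
  (1 - 1 / (p : ℂ)) * ((p : ℂ) ^ (-(3 * s + 1))) ^ k +
    (if k = 0 then -(1 - 1 / (p : ℂ)) else 0)

lemma Fth_pow_decomp (hp : p.Prime) (e : ℕ × ℕ × ℕ × ℕ) :
    Fth s (p ^ e.1, p ^ e.2.1, p ^ e.2.2.1, p ^ e.2.2.2) =
      gA s p e.1 * (gD s p e.2.1 * (gD s p e.2.2.1 * gD s p e.2.2.2)) +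
      gB s p e.1 * (gW2 s p e.2.1 * (gD s p e.2.2.1 * gD s p e.2.2.2)) +
      gB s p e.1 * (gD s p e.2.1 * (gW3 s p e.2.2.1 * gD s p e.2.2.2)) +
      gB s p e.1 * (gD s p e.2.1 * (gD s p e.2.2.1 * gW3 s p e.2.2.2)) := by
  obtain ⟨e1, e2, e3, e4⟩ := e
  rw [Fth]
  simp only [cpow_pow_nat]
  rcases e1 with _ | a <;> rcases e2 with _ | b <;> rcases e3 with _ | c <;>
    rcases e4 with _ | d <;>
    simp [gA, gB, gD, gW2, gW3, vartheta_one, vartheta_p1 hp, vartheta_pos2_one hp,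
      vartheta_pos3_one hp, vartheta_pos4_one hp, vartheta_pos2_pow hp, vartheta_pos3_pow hp,
      vartheta_pos4_pow hp, vartheta_zero23 hp, vartheta_zero24 hp, vartheta_zero34 hp] <;>
    push_cast <;>
    ring

end Decomp

section LpEq

variable {p : ℕ}

lemma inv_one_sub_inv {Q : ℂ} (h0 : Q ≠ 0) (h1 : Q - 1 ≠ 0) :
    (1 - Q⁻¹)⁻¹ = 1 + (Q - 1)⁻¹ := by
  field_simp
  ring

set_option maxHeartbeats 2000000 in
include hs in
lemma Lp_eq (hp : p.Prime) :
    Lp s p =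
      1 + (1 - 1 / (p : ℂ)) *
          (((p : ℂ) ^ (2 * s + 1) - 1)⁻¹ + 2 * ((p : ℂ) ^ (3 * s + 1) - 1)⁻¹ +
            (1 - 2 / (p : ℂ)) * ((p : ℂ) ^ (4 * s + 1) - 1)⁻¹) +
        (1 - 1 / (p : ℂ)) ^ 2 * ((p : ℂ) ^ (4 * s + 1) - 1)⁻¹ *
          (((p : ℂ) ^ (2 * s + 1) - 1)⁻¹ + 2 * ((p : ℂ) ^ (3 * s + 1) - 1)⁻¹) := by
  have hppos : (0 : ℝ) < (p : ℝ) := by exact_mod_cast hp.pos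
  have hp1 : (1 : ℝ) < (p : ℝ) := by exact_mod_cast hp.one_lt
  have hre4 : (-(4 * s + 1)).re = -(4 * s.re + 1) := by simp [Complex.add_re, Complex.mul_re]
  have hre2 : (-(2 * s + 1)).re = -(2 * s.re + 1) := by simp [Complex.add_re, Complex.mul_re]
  have hre3 : (-(3 * s + 1)).re = -(3 * s.re + 1) := by simp [Complex.add_re, Complex.mul_re]
  have hre4' : (4 * s + 1).re = 4 * s.re + 1 := by simp [Complex.add_re, Complex.mul_re]
  have hre2' : (2 * s + 1).re = 2 * s.re + 1 := by simp [Complex.add_re, Complex.mul_re]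
  have hre3' : (3 * s + 1).re = 3 * s.re + 1 := by simp [Complex.add_re, Complex.mul_re]
  have hX : ‖(p : ℂ) ^ (-(4 * s + 1))‖ < 1 := by
    rw [show ((p : ℂ)) = (((p : ℕ) : ℂ)) from rfl, norm_natCast_cpow hp.pos.ne' _, hre4]
    exact Real.rpow_lt_one_of_one_lt_of_neg hp1 (by linarith)
  have hY : ‖(p : ℂ) ^ (-(2 * s + 1))‖ < 1 := by
    rw [show ((p : ℂ)) = (((p : ℕ) : ℂ)) from rfl, norm_natCast_cpow hp.pos.ne' _, hre2]
    exact Real.rpow_lt_one_of_one_lt_of_neg hp1 (by linarith)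
  have hZ : ‖(p : ℂ) ^ (-(3 * s + 1))‖ < 1 := by
    rw [show ((p : ℂ)) = (((p : ℕ) : ℂ)) from rfl, norm_natCast_cpow hp.pos.ne' _, hre3]
    exact Real.rpow_lt_one_of_one_lt_of_neg hp1 (by linarith)
  have hA : HasSum (gA s p)
      (((1 - 1 / (p : ℂ)) * (1 - 2 / (p : ℂ))) * (1 - (p : ℂ) ^ (-(4 * s + 1)))⁻¹ +
        (1 - (1 - 1 / (p : ℂ)) * (1 - 2 / (p : ℂ)))) := hasSum_aux hX _ _
  have hB : HasSum (gB s p)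
      ((1 - 1 / (p : ℂ)) * (1 - (p : ℂ) ^ (-(4 * s + 1)))⁻¹ + (1 - (1 - 1 / (p : ℂ)))) :=
    hasSum_aux hX _ _
  have hD : HasSum (gD s p) ((0 : ℂ) * (1 - (p : ℂ) ^ (-(4 * s + 1)))⁻¹ + 1) :=
    hasSum_aux hX _ _
  have hW2 : HasSum (gW2 s p)
      ((1 - 1 / (p : ℂ)) * (1 - (p : ℂ) ^ (-(2 * s + 1)))⁻¹ + -(1 - 1 / (p : ℂ))) :=
    hasSum_aux hY _ _
  have hW3 : HasSum (gW3 s p)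
      ((1 - 1 / (p : ℂ)) * (1 - (p : ℂ) ^ (-(3 * s + 1)))⁻¹ + -(1 - 1 / (p : ℂ))) :=
    hasSum_aux hZ _ _
  have nA : Summable fun k => ‖gA s p k‖ := summable_norm_aux hX _ _
  have nB : Summable fun k => ‖gB s p k‖ := summable_norm_aux hX _ _
  have nD : Summable fun k => ‖gD s p k‖ := summable_norm_aux hX _ _
  have nW2 : Summable fun k => ‖gW2 s p k‖ := summable_norm_aux hY _ _
  have nW3 : Summable fun k => ‖gW3 s p k‖ := summable_norm_aux hZ _ _
  have T1 := hasSum_mul4 hA hD hD hD nA nD nD nD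
  have T2 := hasSum_mul4 hB hW2 hD hD nB nW2 nD nD
  have T3 := hasSum_mul4 hB hD hW3 hD nB nD nW3 nD
  have T4 := hasSum_mul4 hB hD hD hW3 nB nD nD nW3
  have Tall := ((T1.add T2).add T3).add T4
  have heq : (fun e : ℕ × ℕ × ℕ × ℕ => Fth s (p ^ e.1, p ^ e.2.1, p ^ e.2.2.1, p ^ e.2.2.2)) =
      fun e =>
        gA s p e.1 * (gD s p e.2.1 * (gD s p e.2.2.1 * gD s p e.2.2.2)) +
        gB s p e.1 * (gW2 s p e.2.1 * (gD s p e.2.2.1 * gD s p e.2.2.2)) +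
        gB s p e.1 * (gD s p e.2.1 * (gW3 s p e.2.2.1 * gD s p e.2.2.2)) +
        gB s p e.1 * (gD s p e.2.1 * (gD s p e.2.2.1 * gW3 s p e.2.2.2)) :=
    funext fun e => Fth_pow_decomp hp e
  rw [Lp, heq, Tall.tsum_eq]
  -- now pure algebra
  have hnorm : ∀ w : ℂ, 0 < w.re → 1 < ‖(p : ℂ) ^ w‖ := by
    intro w hw
    rw [show ((p : ℂ)) = (((p : ℕ) : ℂ)) from rfl, norm_natCast_cpow hp.pos.ne' _]
    exact (Real.one_lt_rpow_iff_of_pos hppos).mpr (Or.inl ⟨hp1, hw⟩)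
  have h4 : 1 < ‖(p : ℂ) ^ (4 * s + 1)‖ := hnorm _ (by rw [hre4']; linarith)
  have h2 : 1 < ‖(p : ℂ) ^ (2 * s + 1)‖ := hnorm _ (by rw [hre2']; linarith)
  have h3 : 1 < ‖(p : ℂ) ^ (3 * s + 1)‖ := hnorm _ (by rw [hre3']; linarith)
  have ne04 : (p : ℂ) ^ (4 * s + 1) ≠ 0 := by
    intro h; rw [h] at h4; simp at h4; linarith
  have ne02 : (p : ℂ) ^ (2 * s + 1) ≠ 0 := by
    intro h; rw [h] at h2; simp at h2; linarith
  have ne03 : (p : ℂ) ^ (3 * s + 1) ≠ 0 := by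
    intro h; rw [h] at h3; simp at h3; linarith
  have ne14 : (p : ℂ) ^ (4 * s + 1) - 1 ≠ 0 := by
    refine sub_ne_zero.mpr fun h => ?_
    rw [h] at h4; simp at h4
  have ne12 : (p : ℂ) ^ (2 * s + 1) - 1 ≠ 0 := by
    refine sub_ne_zero.mpr fun h => ?_
    rw [h] at h2; simp at h2
  have ne13 : (p : ℂ) ^ (3 * s + 1) - 1 ≠ 0 := by
    refine sub_ne_zero.mpr fun h => ?_
    rw [h] at h3; simp at h3
  simp only [Complex.cpow_neg]
  rw [inv_one_sub_inv ne04 ne14, inv_one_sub_inv ne02 ne12, inv_one_sub_inv ne03 ne13]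
  ring

end LpEq

end VarthetaEP

open VarthetaEP in
theorem vartheta_euler_product (s : ℂ) (hs : 0 < s.re) :
    Summable (fun e : ℕ × ℕ × ℕ × ℕ =>
      ‖(vartheta (e.1 + 1) (e.2.1 + 1) (e.2.2.1 + 1) (e.2.2.2 + 1) : ℂ) *
        ((e.1 + 1 : ℕ) : ℂ) ^ (-(4 * s + 1)) * ((e.2.1 + 1 : ℕ) : ℂ) ^ (-(2 * s + 1)) *
        ((e.2.2.1 + 1 : ℕ) : ℂ) ^ (-(3 * s + 1)) * ((e.2.2.2 + 1 : ℕ) : ℂ) ^ (-(3 * s + 1))‖) ∧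
    (∑' e : ℕ × ℕ × ℕ × ℕ,
      (vartheta (e.1 + 1) (e.2.1 + 1) (e.2.2.1 + 1) (e.2.2.2 + 1) : ℂ) *
        ((e.1 + 1 : ℕ) : ℂ) ^ (-(4 * s + 1)) * ((e.2.1 + 1 : ℕ) : ℂ) ^ (-(2 * s + 1)) *
        ((e.2.2.1 + 1 : ℕ) : ℂ) ^ (-(3 * s + 1)) * ((e.2.2.2 + 1 : ℕ) : ℂ) ^ (-(3 * s + 1)))
      = ∏' p : Nat.Primes,
          (1 + (1 - 1 / ((p : ℕ) : ℂ)) *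
              ((((p : ℕ) : ℂ) ^ (2 * s + 1) - 1)⁻¹ + 2 * (((p : ℕ) : ℂ) ^ (3 * s + 1) - 1)⁻¹ +
                (1 - 2 / ((p : ℕ) : ℂ)) * (((p : ℕ) : ℂ) ^ (4 * s + 1) - 1)⁻¹) +
            (1 - 1 / ((p : ℕ) : ℂ)) ^ 2 * (((p : ℕ) : ℂ) ^ (4 * s + 1) - 1)⁻¹ *
              ((((p : ℕ) : ℂ) ^ (2 * s + 1) - 1)⁻¹ + 2 * (((p : ℕ) : ℂ) ^ (3 * s + 1) - 1)⁻¹)) := by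
  classical
  have hinj : Function.Injective (fun e : ℕ × ℕ × ℕ × ℕ =>
      ((e.1 + 1, e.2.1 + 1, e.2.2.1 + 1, e.2.2.2 + 1) : ℕ × ℕ × ℕ × ℕ)) := by
    rintro ⟨a, b, c, d⟩ ⟨a', b', c', d'⟩ h
    simp only [Prod.mk.injEq] at h
    obtain ⟨h1, h2, h3, h4⟩ := h
    simp only [Prod.mk.injEq]
    omega
  constructor
  · have h := (summable_norm_Fth hs).comp_injective hinj
    exact h.congr fun e => rfl
  · have hsupp : Function.support (Fth s) ⊆ Set.range (fun e : ℕ × ℕ × ℕ × ℕ =>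
        ((e.1 + 1, e.2.1 + 1, e.2.2.1 + 1, e.2.2.2 + 1) : ℕ × ℕ × ℕ × ℕ)) := by
      intro η hη
      by_cases h0 : η.1 = 0 ∨ η.2.1 = 0 ∨ η.2.2.1 = 0 ∨ η.2.2.2 = 0
      · exact absurd (Fth_zero_left hs h0) hη
      · push_neg at h0
        obtain ⟨h1, h2, h3, h4⟩ := h0
        obtain ⟨a, b, c, d⟩ := η
        simp only at h1 h2 h3 h4
        refine ⟨(a - 1, b - 1, c - 1, d - 1), ?_⟩
        show (a - 1 + 1, b - 1 + 1, c - 1 + 1, d - 1 + 1) = (a, b, c, d)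
        simp only [Prod.mk.injEq]
        refine ⟨?_, ?_, ?_, ?_⟩ <;> omega
    have htsum := hinj.tsum_eq (f := Fth s) hsupp
    have hP := hasProd_Lp hs
    have hfun : (fun p : Nat.Primes => Lp s p) = fun p : Nat.Primes =>
        (1 + (1 - 1 / ((p : ℕ) : ℂ)) *
            ((((p : ℕ) : ℂ) ^ (2 * s + 1) - 1)⁻¹ + 2 * (((p : ℕ) : ℂ) ^ (3 * s + 1) - 1)⁻¹ +
              (1 - 2 / ((p : ℕ) : ℂ)) * (((p : ℕ) : ℂ) ^ (4 * s + 1) - 1)⁻¹) +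
          (1 - 1 / ((p : ℕ) : ℂ)) ^ 2 * (((p : ℕ) : ℂ) ^ (4 * s + 1) - 1)⁻¹ *
            ((((p : ℕ) : ℂ) ^ (2 * s + 1) - 1)⁻¹ + 2 * (((p : ℕ) : ℂ) ^ (3 * s + 1) - 1)⁻¹)) :=
      funext fun p => Lp_eq hs p.prop
    rw [hfun] at hP
    rw [hP.tprod_eq, ← htsum]
    exact tsum_congr fun e => rfl
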